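/- Let q be even and a, b ∈ F_{q^2} with ab(a - b^{1-q}) ≠ 0, a/b^2 ∈ F_q, Tr_{F_q/F_2}(a/b^2) = 0, and b^2 + a^2 b^{q-1} + a = 0. Then a + b + 1 ≠ 0. -/

import Mathlib

lemma aux_tele {F : Type*} [Field F] [CharP F 2] (s : F) (n : ℕ) :
    ∑ i ∈ Finset.range n, (s + s ^ 2) ^ (2 ^ i) = s + s ^ (2 ^ n) := by
  induction n with
  | zero =>
    simp only [Finset.range_zero, Finset.sum_empty, pow_one]
    have h2 : (2 : F) = 0 := by exact_mod_cast CharP.cast_eq_zero F 2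
    linear_combination (-s) * h2
  | succ n ih =>
    rw [Finset.sum_range_succ, ih, add_pow_char_pow]
    have h2 : (2 : F) = 0 := by exact_mod_cast CharP.cast_eq_zero F 2
    have : (s ^ 2) ^ 2 ^ n = s ^ 2 ^ (n + 1) := by
      rw [← pow_mul, pow_succ, mul_comm]
    rw [this]
    linear_combination s ^ 2 ^ n * h2

/-- For `q = 2ⁿ` and `a, b ∈ F_{q²}` with `ab(a - b^(1-q)) ≠ 0`, `a/b² ∈ F_q`,
`Tr_{F_q/F_2}(a/b²) = 0`, and `b² + a² b^(q-1) + a = 0`, we have `a + b + 1 ≠ 0`. -/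
theorem stmt_15 (n q : ℕ) (hn : 0 < n) (hq : q = 2 ^ n)
    (F : Type*) [Field F] [Fintype F] (hcard : Fintype.card F = q ^ 2)
    (a b : F) (ha : a ≠ 0) (hb : b ≠ 0) (hab : a ≠ b * (b ^ q)⁻¹)
    (he : (a / b ^ 2) ^ q = a / b ^ 2)
    (htr : ∑ i ∈ Finset.range n, (a / b ^ 2) ^ (2 ^ i) = 0)
    (heq : b ^ 2 + a ^ 2 * b ^ (q - 1) + a = 0) :
    a + b + 1 ≠ 0 := by
  intro h
  -- characteristic 2
  haveI : CharP F 2 := by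
    have hchar := ringChar.charP F
    obtain ⟨m, hp, hcard'⟩ := FiniteField.card F (ringChar F)
    have : ringChar F ∣ 2 := by
      have hdvd : ringChar F ∣ Fintype.card F := by
        rw [hcard']; exact dvd_pow_self _ (by positivity)
      rw [hcard, hq, ← pow_mul] at hdvd
      exact hp.dvd_of_dvd_pow hdvd
    have h2 : ringChar F = 2 := (Nat.prime_dvd_prime_iff_eq hp Nat.prime_two).mp this
    rwa [h2] at hchar
  have h2 : (2 : F) = 0 := by exact_mod_cast CharP.cast_eq_zero F 2
  have hba : a = b + 1 := by linear_combination h - (b + 1) * h2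
  -- rewrite e
  have hee : a / b ^ 2 = b⁻¹ + b⁻¹ ^ 2 := by
    field_simp
    linear_combination h - (b + 1) * h2
  rw [hee, aux_tele, ← hq] at htr
  -- b ∈ F_q
  have hbq : b ^ q = b := by
    have h1 : b⁻¹ ^ q = b⁻¹ := by linear_combination htr - b⁻¹ * h2
    have := congrArg (·⁻¹) h1
    simpa [inv_pow] using this
  have hq2 : 2 ≤ q := by rw [hq]; exact Nat.one_lt_two_pow_iff.mpr (by omega)
  have hbq1 : b ^ (q - 1) = 1 := by
    have hkey : b ^ (q - 1 + 1) = b := by rw [show q - 1 + 1 = q by omega]; exact hbq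
    refine mul_right_cancel₀ hb ?_
    rw [one_mul, ← pow_succ]; exact hkey
  rw [hbq1, hba] at heq
  apply hb
  linear_combination heq - (b ^ 2 + b + 1) * h2
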